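/- Let (N, P_S) be the Z0/Z1 channel and N^{CSIR} its associated channel with CSIR. Then there exists a classical coding scheme with causal CSIT for (N^{CSIR}, P_S) with message size M = 2 and blocklength n = 2 whose probability of success is at least 7/8; consequently η^{C,ca}_{opt,M=2,n=2}(N^{CSIR}, P_S) ≥ 7/8. -/

import Mathlib

open scoped Classical BigOperators
open Finset Filter

noncomputable section

def IsPMF {S : Type*} [Fintype S] (P : S → ℝ) : Prop :=
  (∀ s, 0 ≤ P s) ∧ ∑ s, P s = 1

def IsChannel {X Y S : Type*} [Fintype Y] (N : Y → X → S → ℝ) : Prop :=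
  (∀ y x s, 0 ≤ N y x s) ∧ ∀ x s, ∑ y, N y x s = 1

def IsCondPMF {X S : Type*} [Fintype X] (PXS : X → S → ℝ) : Prop :=
  (∀ x s, 0 ≤ PXS x s) ∧ ∀ s, ∑ x, PXS x s = 1

def prodP {S : Type*} (P : S → ℝ) {n : ℕ} (s : Fin n → S) : ℝ := ∏ i, P (s i)

def prodN {X Y S : Type*} (N : Y → X → S → ℝ) {n : ℕ}
    (y : Fin n → Y) (x : Fin n → X) (s : Fin n → S) : ℝ :=
  ∏ i, N (y i) (x i) (s i)

/-- NS-assisted coding scheme with causal CSIT: nonnegativity, normalization,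
and the conditions C1, C2, C3. -/
def IsNSCa {X Y S : Type*} [Fintype X] [Fintype Y] [Fintype S] (M n : ℕ)
    (Z : (Fin n → X) → Fin M → Fin M → (Fin n → S) → (Fin n → Y) → ℝ) : Prop :=
  (∀ x wh w s y, 0 ≤ Z x wh w s y) ∧
  (∀ w s y, ∑ x, ∑ wh, Z x wh w s y = 1) ∧
  (∀ x w s y y', ∑ wh, Z x wh w s y = ∑ wh, Z x wh w s y') ∧
  (∀ wh w w' s s' y, ∑ x, Z x wh w s y = ∑ x, Z x wh w' s' y) ∧
  (∀ i : ℕ, 1 ≤ i → i < n →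
    ∀ (x : Fin n → X) wh w s s' y, (∀ j : Fin n, (j : ℕ) < i → s j = s' j) →
      ∑ x' ∈ univ.filter (fun x' : Fin n → X => ∀ j : Fin n, (j : ℕ) < i → x' j = x j),
        Z x' wh w s y =
      ∑ x' ∈ univ.filter (fun x' : Fin n → X => ∀ j : Fin n, (j : ℕ) < i → x' j = x j),
        Z x' wh w s' y)

def etaNS {X Y S : Type*} [Fintype X] [Fintype Y] [Fintype S]
    (N : Y → X → S → ℝ) (P : S → ℝ) (M n : ℕ)
    (Z : (Fin n → X) → Fin M → Fin M → (Fin n → S) → (Fin n → Y) → ℝ) : ℝ :=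
  (1 / (M : ℝ)) * ∑ w, ∑ x, ∑ s, ∑ y, prodP P s * prodN N y x s * Z x w w s y

def etaNSOpt {X Y S : Type*} [Fintype X] [Fintype Y] [Fintype S]
    (N : Y → X → S → ℝ) (P : S → ℝ) (M n : ℕ) : ℝ :=
  sSup {e : ℝ | ∃ Z : (Fin n → X) → Fin M → Fin M → (Fin n → S) → (Fin n → Y) → ℝ,
    IsNSCa M n Z ∧ etaNS N P M n Z = e}

/-- The length-`(j+1)` prefix `s^{j+1}` of a state sequence. -/
def prefixS {S : Type*} {n : ℕ} (s : Fin n → S) (j : Fin n) : Fin ((j : ℕ) + 1) → S :=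
  fun k => s ⟨k, Nat.lt_of_le_of_lt (Nat.le_of_lt_succ k.isLt) j.isLt⟩

/-- A classical coding scheme with causal CSIT. -/
structure ClassicalCa (X S Y : Type*) [Fintype X] (M n : ℕ) where
  Q : Type
  fq : Fintype Q
  PQ : Q → ℝ
  E : (j : Fin n) → X → (Fin (j : ℕ) → X) → Fin M → (Fin ((j : ℕ) + 1) → S) → Q → ℝ
  D : Fin M → (Fin n → Y) → Q → ℝ
  PQ_nonneg : ∀ q, 0 ≤ PQ q
  PQ_sum : ∑ q ∈ @Finset.univ Q fq, PQ q = 1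
  E_nonneg : ∀ j xj h w sj q, 0 ≤ E j xj h w sj q
  E_sum : ∀ j h w sj q, ∑ xj, E j xj h w sj q = 1
  D_nonneg : ∀ wh y q, 0 ≤ D wh y q
  D_sum : ∀ y q, ∑ wh, D wh y q = 1

def etaC {X Y S : Type*} [Fintype X] [Fintype Y] [Fintype S]
    (N : Y → X → S → ℝ) (P : S → ℝ) (M n : ℕ) (C : ClassicalCa X S Y M n) : ℝ :=
  (1 / (M : ℝ)) * ∑ w : Fin M, ∑ q ∈ @Finset.univ C.Q C.fq, C.PQ q *
    ∑ x : Fin n → X, ∑ s : Fin n → S, ∑ y : Fin n → Y,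
      prodP P s *
      (∏ j, C.E j (x j) (fun k => x ⟨k, k.isLt.trans j.isLt⟩) w (prefixS s j) q) *
      prodN N y x s * C.D w y q

def etaCOpt {X Y S : Type*} [Fintype X] [Fintype Y] [Fintype S]
    (N : Y → X → S → ℝ) (P : S → ℝ) (M n : ℕ) : ℝ :=
  sSup {e : ℝ | ∃ C : ClassicalCa X S Y M n, etaC N P M n C = e}

/-- Conditional mutual information I(X;Y|S) for the joint distribution
P_{XYS}(x,y,s) = P_S(s) P_{X|S}(x|s) N(y|x,s), in bits. -/
def condMI {X Y S : Type*} [Fintype X] [Fintype Y] [Fintype S]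
    (N : Y → X → S → ℝ) (P : S → ℝ) (PXS : X → S → ℝ) : ℝ :=
  ∑ x, ∑ y, ∑ s,
    (P s * PXS x s * N y x s) *
      Real.logb 2 ((P s * PXS x s * N y x s) * P s /
        ((∑ y', P s * PXS x s * N y' x s) * (∑ x', P s * PXS x' s * N y x' s)))

/-- Transition function of the Z0/Z1 channel (arguments: output, input, state). -/
def NZ (y x s : Bool) : ℝ := if x = s then (if y = x then 1 else 0) else 1 / 2

/-- The uniform state distribution of the Z0/Z1 channel. -/
def PZ (_ : Bool) : ℝ := 1 / 2

/-- The channel with CSIR associated to a channel with state. -/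
def NCSIR {X Y S : Type*} (N : Y → X → S → ℝ) : (Y × S) → X → S → ℝ :=
  fun ys x s => if ys.2 = s then N ys.1 x s else 0


def myC : ClassicalCa Bool Bool (Bool × Bool) 2 2 where
  Q := Unit
  fq := inferInstance
  PQ := fun _ => 1
  E := fun j xj _ w sj _ => if xj = xor (decide (w = 1)) (sj (Fin.last j)) then 1 else 0
  D := fun wh y _ =>
    if wh = (if (y 0).1 = (y 0).2 ∧ (y 1).1 = (y 1).2 then 0 else 1) then 1 else 0
  PQ_nonneg := fun _ => zero_le_one
  PQ_sum := by simp
  E_nonneg := by intro j xj h w sj q; split <;> norm_num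
  E_sum := by intro j h w sj q; simp
  D_nonneg := by intro wh y q; split <;> split <;> norm_num
  D_sum := by intro y q; simp

lemma sum_fin2_fun {α : Type*} [Fintype α] (f : (Fin 2 → α) → ℝ) :
    ∑ x : Fin 2 → α, f x = ∑ a : α, ∑ b : α, f ![a, b] := by
  rw [← (finTwoArrowEquiv α).symm.sum_comp]
  simp [finTwoArrowEquiv, Fintype.sum_prod_type]

lemma myC_eta : etaC (NCSIR NZ) PZ 2 2 myC = 7/8 := by
  rw [etaC]
  simp only [sum_fin2_fun]
  simp [myC, prodP, prodN, prefixS, NZ, NCSIR, PZ, Fin.sum_univ_two, Fin.prod_univ_two,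
    Fintype.sum_prod_type, Fin.isValue]
  rw [show (@Finset.univ Unit myC.fq).card = 1 from rfl]
  norm_num

lemma etaC_le_256 (C : ClassicalCa Bool Bool (Bool × Bool) 2 2) :
    etaC (NCSIR NZ) PZ 2 2 C ≤ 256 := by
  have hE : ∀ j xj h w sj q, C.E j xj h w sj q ≤ 1 := by
    intro j xj h w sj q
    calc C.E j xj h w sj q ≤ ∑ xj', C.E j xj' h w sj q :=
          Finset.single_le_sum (fun i _ => C.E_nonneg j i h w sj q) (Finset.mem_univ xj)
      _ = 1 := C.E_sum j h w sj q
  have hD : ∀ wh y q, C.D wh y q ≤ 1 := by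
    intro wh y q
    calc C.D wh y q ≤ ∑ wh', C.D wh' y q :=
          Finset.single_le_sum (fun i _ => C.D_nonneg i y q) (Finset.mem_univ wh)
      _ = 1 := C.D_sum y q
  have hN1 : ∀ (y : Bool × Bool) x s, NCSIR NZ y x s ≤ 1 := by
    intro y x s; simp only [NCSIR, NZ]; split_ifs <;> norm_num
  have hN0 : ∀ (y : Bool × Bool) x s, 0 ≤ NCSIR NZ y x s := by
    intro y x s; simp only [NCSIR, NZ]; split_ifs <;> norm_num
  have hterm : ∀ (w : Fin 2) (q : C.Q) (x s : Fin 2 → Bool) (y : Fin 2 → Bool × Bool),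
      prodP PZ s *
        (∏ j, C.E j (x j) (fun k => x ⟨k, k.isLt.trans j.isLt⟩) w (prefixS s j) q) *
        prodN (NCSIR NZ) y x s * C.D w y q ≤ 1 := by
    intro w q x s y
    have hP1 : prodP PZ s ≤ 1 := by
      apply Finset.prod_le_one <;> intro i _ <;> simp [PZ] <;> norm_num
    have hP0 : 0 ≤ prodP PZ s := Finset.prod_nonneg (by intro i _; simp [PZ])
    have hE1 : (∏ j, C.E j (x j) (fun k => x ⟨k, k.isLt.trans j.isLt⟩) w (prefixS s j) q) ≤ 1 :=
      Finset.prod_le_one (fun i _ => C.E_nonneg _ _ _ _ _ _) (fun i _ => hE _ _ _ _ _ _)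
    have hE0 : 0 ≤ ∏ j, C.E j (x j) (fun k => x ⟨k, k.isLt.trans j.isLt⟩) w (prefixS s j) q :=
      Finset.prod_nonneg (fun i _ => C.E_nonneg _ _ _ _ _ _)
    have hNp1 : prodN (NCSIR NZ) y x s ≤ 1 :=
      Finset.prod_le_one (fun i _ => hN0 _ _ _) (fun i _ => hN1 _ _ _)
    have hNp0 : 0 ≤ prodN (NCSIR NZ) y x s := Finset.prod_nonneg (fun i _ => hN0 _ _ _)
    exact mul_le_one₀ (mul_le_one₀ (mul_le_one₀ hP1 hE0 hE1) hNp0 hNp1)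
      (C.D_nonneg _ _ _) (hD _ _ _)
  have hT : ∀ (w : Fin 2) (q : C.Q),
      (∑ x : Fin 2 → Bool, ∑ s : Fin 2 → Bool, ∑ y : Fin 2 → Bool × Bool,
        prodP PZ s *
          (∏ j, C.E j (x j) (fun k => x ⟨k, k.isLt.trans j.isLt⟩) w (prefixS s j) q) *
          prodN (NCSIR NZ) y x s * C.D w y q) ≤ 256 := by
    intro w q
    calc (∑ x : Fin 2 → Bool, ∑ s : Fin 2 → Bool, ∑ y : Fin 2 → Bool × Bool,
          prodP PZ s *
            (∏ j, C.E j (x j) (fun k => x ⟨k, k.isLt.trans j.isLt⟩) w (prefixS s j) q) *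
            prodN (NCSIR NZ) y x s * C.D w y q)
        ≤ ∑ _x : Fin 2 → Bool, ∑ _s : Fin 2 → Bool, ∑ _y : Fin 2 → Bool × Bool, (1 : ℝ) := by
          refine Finset.sum_le_sum fun x _ => Finset.sum_le_sum fun s _ =>
            Finset.sum_le_sum fun y _ => hterm w q x s y
      _ = 256 := by
          simp [Finset.sum_const, Finset.card_univ]
          norm_num
  rw [etaC]
  letI := C.fq
  have hq : ∀ w : Fin 2, (∑ q ∈ @Finset.univ C.Q C.fq, C.PQ q *
      ∑ x : Fin 2 → Bool, ∑ s : Fin 2 → Bool, ∑ y : Fin 2 → Bool × Bool,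
        prodP PZ s *
          (∏ j, C.E j (x j) (fun k => x ⟨k, k.isLt.trans j.isLt⟩) w (prefixS s j) q) *
          prodN (NCSIR NZ) y x s * C.D w y q) ≤ 256 := by
    intro w
    calc (∑ q ∈ @Finset.univ C.Q C.fq, C.PQ q *
        ∑ x : Fin 2 → Bool, ∑ s : Fin 2 → Bool, ∑ y : Fin 2 → Bool × Bool,
          prodP PZ s *
            (∏ j, C.E j (x j) (fun k => x ⟨k, k.isLt.trans j.isLt⟩) w (prefixS s j) q) *
            prodN (NCSIR NZ) y x s * C.D w y q)
        ≤ ∑ q ∈ @Finset.univ C.Q C.fq, C.PQ q * 256 :=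
          Finset.sum_le_sum fun q _ =>
            mul_le_mul_of_nonneg_left (hT w q) (C.PQ_nonneg q)
      _ = 256 := by rw [← Finset.sum_mul, C.PQ_sum, one_mul]
  refine le_trans (mul_le_mul_of_nonneg_left (Finset.sum_le_sum fun w _ => hq w)
    (by positivity)) ?_
  norm_num

/-- For the Z0/Z1 channel with CSIR there is a classical causal-CSIT
scheme with `M = 2`, `n = 2` whose success probability is at least `7/8`; consequently
`η^{C,ca}_opt(N^CSIR, P_S) ≥ 7/8`. -/
theorem z0z1_csir_classical_scheme :
    (∃ C : ClassicalCa Bool Bool (Bool × Bool) 2 2, 7 / 8 ≤ etaC (NCSIR NZ) PZ 2 2 C) ∧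
    etaCOpt (NCSIR NZ) PZ 2 2 ≥ 7 / 8 := by
  have hC : etaC (NCSIR NZ) PZ 2 2 myC = 7 / 8 := myC_eta
  constructor
  · exact ⟨myC, hC.ge⟩
  · rw [etaCOpt, ge_iff_le, ← hC]
    refine le_csSup ⟨256, ?_⟩ ⟨myC, rfl⟩
    rintro e ⟨C, rfl⟩
    exact etaC_le_256 C

end
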